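/- Let p > 2 be a prime, let α, γ ∈ F_p with α ≠ 0, set f(X) = αX² + γ, and let S = {(x,y) ∈ F_p² : y < f(x)}. Then the horizontal lines intersect S in at least (p+1)/2 different numbers of points; that is, the image of the projection function pr_{S,0}, i.e. the set {#{x ∈ F_p : b < f(x)} : b ∈ F_p} ⊆ ℕ, has cardinality at least (p+1)/2. -/
import Mathlib


/-- The projection function of the set `S = {(x,y) : y < f(x)}` from direction `d`:
`pr p f d b` is the number of points of `S` on the line `Y = d X + b`. -/
def parabolaProj (p : ℕ) [NeZero p] (f : ZMod p → ZMod p) (d b : ZMod p) : ℕ :=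
  (Finset.univ.filter fun x : ZMod p => (d * x + b).val < (f x).val).card

/-- The horizontal lines intersect the set of points below the parabola `Y = αX² + γ` in
at least `(p+1)/2` different numbers of points. -/
theorem horizontal_intersection_numbers (p : ℕ) [Fact p.Prime] (hp : 2 < p)
    (α γ : ZMod p) (hα : α ≠ 0) :
    (p + 1) / 2 ≤
      (Finset.univ.image (parabolaProj p (fun x => α * x ^ 2 + γ) 0)).card := by
  classical
  have hp' : p.Prime := Fact.out
  set F : ZMod p → ZMod p := fun x => α * x ^ 2 + γ with hF
  set T : Finset (ZMod p) := Finset.univ.image F with hT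
  -- key monotonicity: projection is strictly decreasing on T w.r.t. val
  have key : ∀ c c' : ZMod p, c' ∈ T → c.val < c'.val →
      parabolaProj p F 0 c' < parabolaProj p F 0 c := by
    intro c c' hc' hlt
    obtain ⟨x0, -, hx0⟩ := Finset.mem_image.mp hc'
    unfold parabolaProj
    apply Finset.card_lt_card
    constructor
    · intro x hx
      simp only [Finset.mem_filter, zero_mul, zero_add] at hx ⊢
      exact ⟨hx.1, lt_trans hlt hx.2⟩
    · intro hsub
      have hx0mem : x0 ∈ Finset.univ.filter
          fun x : ZMod p => (0 * x + c).val < (F x).val := by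
        simp only [Finset.mem_filter, zero_mul, zero_add]
        exact ⟨Finset.mem_univ _, by rw [hx0]; exact hlt⟩
      have := hsub hx0mem
      simp only [Finset.mem_filter, zero_mul, zero_add, hx0] at this
      exact lt_irrefl _ this.2
  -- injectivity on T
  have hinj : Set.InjOn (parabolaProj p F 0) T := by
    intro c hc c' hc' heq
    by_contra hne
    have hvne : c.val ≠ c'.val := fun h => hne (ZMod.val_injective p h)
    rcases lt_or_gt_of_ne hvne with h | h
    · exact absurd heq (Nat.ne_of_gt (key c c' (by simpa using hc') h))
    · exact absurd heq (Nat.ne_of_lt (key c' c (by simpa using hc) h))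
  have hcard2 : T.card ≤ (Finset.univ.image (parabolaProj p F 0)).card := by
    apply Finset.card_le_card_of_injOn
    · intro c _; exact Finset.mem_image_of_mem _ (Finset.mem_univ c)
    · exact fun c hc c' hc' h => hinj (by simpa using hc) (by simpa using hc') h
  -- lower bound on T.card
  have hγT : γ ∈ T := Finset.mem_image.mpr ⟨0, Finset.mem_univ _, by simp [hF]⟩
  have hfib : ∀ c ∈ T, (Finset.univ.filter fun x => F x = c).card ≤ 2 := by
    intro c hc
    obtain ⟨x0, -, hx0⟩ := Finset.mem_image.mp hc
    have hsub : (Finset.univ.filter fun x => F x = c) ⊆ {x0, -x0} := by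
      intro x hx
      simp only [Finset.mem_filter] at hx
      have : α * x ^ 2 + γ = α * x0 ^ 2 + γ := by
        have h := hx.2; rw [← hx0] at h; simpa [hF] using h
      have hsq : x ^ 2 = x0 ^ 2 := by
        have h1 : α * x ^ 2 = α * x0 ^ 2 := by linear_combination this
        exact mul_left_cancel₀ hα h1
      have : x * x = x0 * x0 := by
        simpa [pow_two] using hsq
      rcases mul_self_eq_mul_self_iff.mp this with h | h
      · simp [h]
      · simp [h]
    calc (Finset.univ.filter fun x => F x = c).card ≤ ({x0, -x0} : Finset (ZMod p)).card :=
          Finset.card_le_card hsub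
      _ ≤ 2 := Finset.card_insert_le _ _ |>.trans (by simp)
  have hfibγ : (Finset.univ.filter fun x => F x = γ).card = 1 := by
    have : (Finset.univ.filter fun x => F x = γ) = {0} := by
      ext x
      simp only [Finset.mem_filter, Finset.mem_univ, true_and, Finset.mem_singleton, hF]
      constructor
      · intro h
        have : α * x ^ 2 = 0 := by linear_combination h
        rcases mul_eq_zero.mp this with h | h
        · exact absurd h hα
        · exact pow_eq_zero_iff (n := 2) (by norm_num) |>.mp h
      · intro h; simp [h]
    rw [this]; simp
  have hsum : p = ∑ c ∈ T, (Finset.univ.filter fun x => F x = c).card := by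
    have := Finset.card_eq_sum_card_image F (Finset.univ : Finset (ZMod p))
    simpa [hT, ZMod.card p] using this
  have hbound : p + 1 ≤ 2 * T.card := by
    have h1 : ∑ c ∈ T, (Finset.univ.filter fun x => F x = c).card
        = 1 + ∑ c ∈ T.erase γ, (Finset.univ.filter fun x => F x = c).card := by
      rw [← Finset.add_sum_erase _ _ hγT, hfibγ]
    have h2 : ∑ c ∈ T.erase γ, (Finset.univ.filter fun x => F x = c).card
        ≤ 2 * (T.card - 1) := by
      calc ∑ c ∈ T.erase γ, (Finset.univ.filter fun x => F x = c).card
          ≤ ∑ _c ∈ T.erase γ, 2 :=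
            Finset.sum_le_sum fun c hc => hfib c (Finset.mem_of_mem_erase hc)
        _ = (T.erase γ).card * 2 := by rw [Finset.sum_const, smul_eq_mul]
        _ = 2 * (T.card - 1) := by rw [Finset.card_erase_of_mem hγT, mul_comm]
    have hT1 : 1 ≤ T.card := Finset.card_pos.mpr ⟨γ, hγT⟩
    omega
  have : (p + 1) / 2 ≤ T.card := by
    have h := Nat.div_le_div_right (c := 2) hbound
    simpa [Nat.mul_div_cancel_left] using h
  exact this.trans hcard2
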